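/- arXiv:0801.1440 — 3 statements merged into one kernel-verified Lean document; each statement's English description precedes it below -/
import Mathlib

section
/- Let X = (X_v, v ∈ V) be a discrete random vector with strictly positive joint distribution, let {A, B} partition V, and suppose X_A is independent of X_B. Then for every subset M ⊆ V that intersects both A and B, the highest-order log-linear interaction parameter of the marginal distribution of X_M vanishes: λ^M_M(i_M) = Σ_{L⊆M} (-1)^{|M\L|} log p_M(i_L, i*_{M\L}) = 0 for all cells i_M. -/
open Finset

/-- The marginal distribution of `p` over the margin `M`, as a function of a full cell
depending only on its `M`-coordinates. -/
noncomputable def marg {V : Type*} [Fintype V] [DecidableEq V] {b : V → ℕ}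
    (p : ((v : V) → Fin (b v)) → ℝ) (M : Finset V) (i : (v : V) → Fin (b v)) : ℝ :=
  ∑ k : (v : V) → Fin (b v), if ∀ v ∈ M, k v = i v then p k else 0

/-- The multivariate logistic parameter `η^M = λ^M_M`: the highest-order log-linear
interaction of the marginal distribution `p_M`, obtained by Möbius inversion of
`log p_M` with baseline cell `(0,...,0)`. -/
noncomputable def mlogit {V : Type*} [Fintype V] [DecidableEq V] {b : V → ℕ}
    (hb : ∀ v, 0 < b v) (p : ((v : V) → Fin (b v)) → ℝ)
    (M : Finset V) (i : (v : V) → Fin (b v)) : ℝ :=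
  ∑ L ∈ M.powerset, (-1 : ℝ) ^ (M.card - L.card) *
    Real.log (marg p M (fun v => if v ∈ L then i v else ⟨0, hb v⟩))

section Aux

variable {V : Type*} [Fintype V] [DecidableEq V] {b : V → ℕ}

lemma marg_congr (p : ((v : V) → Fin (b v)) → ℝ) (S : Finset V)
    {j j' : (v : V) → Fin (b v)} (h : ∀ v ∈ S, j v = j' v) :
    marg p S j = marg p S j' := by
  unfold marg
  refine Finset.sum_congr rfl fun k _ => ?_
  refine if_congr ?_ rfl rfl
  constructor
  · intro hc v hv; rw [← h v hv]; exact hc v hv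
  · intro hc v hv; rw [h v hv]; exact hc v hv

lemma marg_pos (p : ((v : V) → Fin (b v)) → ℝ) (hpos : ∀ i, 0 < p i)
    (S : Finset V) (j : (v : V) → Fin (b v)) : 0 < marg p S j := by
  unfold marg
  refine Finset.sum_pos' (fun k _ => ?_) ⟨j, Finset.mem_univ j, ?_⟩
  · split
    · exact (hpos k).le
    · exact le_refl 0
  · rw [if_pos (fun v _ => rfl)]; exact hpos j

lemma sum_factor (hb : ∀ v, 0 < b v) (A : Finset V)
    (f g : ((v : V) → Fin (b v)) → ℝ)
    (hf : ∀ j j', (∀ v ∈ A, j v = j' v) → f j = f j')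
    (hg : ∀ j j', (∀ v ∉ A, j v = j' v) → g j = g j') :
    (Fintype.card ((v : V) → Fin (b v)) : ℝ) * ∑ k, f k * g k
      = (∑ k, f k) * (∑ k, g k) := by
  classical
  set z : (v : V) → Fin (b v) := fun v => ⟨0, hb v⟩ with hz
  let e := Equiv.piEquivPiSubtypeProd (fun v => v ∈ A) (fun v => Fin (b v))
  set f₁ : ((v : {x // x ∈ A}) → Fin (b v)) → ℝ :=
    fun a => f (fun v => if h : v ∈ A then a ⟨v, h⟩ else z v) with hf₁
  set g₁ : ((v : {x // ¬ x ∈ A}) → Fin (b v)) → ℝ :=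
    fun c => g (fun v => if h : v ∈ A then z v else c ⟨v, h⟩) with hg₁
  have hfe : ∀ x : ((v : {x // x ∈ A}) → Fin (b v)) × ((v : {x // ¬ x ∈ A}) → Fin (b v)),
      f (e.symm x) = f₁ x.1 := by
    intro x
    apply hf
    intro v hv
    simp [e, Equiv.piEquivPiSubtypeProd, hv]
  have hge : ∀ x : ((v : {x // x ∈ A}) → Fin (b v)) × ((v : {x // ¬ x ∈ A}) → Fin (b v)),
      g (e.symm x) = g₁ x.2 := by
    intro x
    apply hg
    intro v hv
    simp [e, Equiv.piEquivPiSubtypeProd, hv]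
  have h1 : ∑ k, f k * g k = (∑ a, f₁ a) * (∑ c, g₁ c) := by
    rw [← e.symm.sum_comp (fun k => f k * g k)]
    rw [Finset.sum_mul_sum]
    rw [Fintype.sum_prod_type]
    exact Finset.sum_congr rfl fun a _ => Finset.sum_congr rfl fun c _ => by
      rw [hfe (a, c), hge (a, c)]
  have h2 : ∑ k, f k
      = (∑ a, f₁ a) * (Fintype.card ((v : {x // ¬ x ∈ A}) → Fin (b v)) : ℝ) := by
    rw [← e.symm.sum_comp f, Fintype.sum_prod_type]
    have hrow : ∀ a, (∑ c : (v : {x // ¬ x ∈ A}) → Fin (b v), f (e.symm (a, c)))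
        = (Fintype.card ((v : {x // ¬ x ∈ A}) → Fin (b v)) : ℝ) * f₁ a := by
      intro a
      rw [Finset.sum_congr rfl fun c _ => hfe (a, c)]
      simp [Finset.sum_const, nsmul_eq_mul]
    simp_rw [hrow]
    rw [← Finset.mul_sum, mul_comm]
  have h3 : ∑ k, g k
      = (Fintype.card ((v : {x // x ∈ A}) → Fin (b v)) : ℝ) * (∑ c, g₁ c) := by
    rw [← e.symm.sum_comp g, Fintype.sum_prod_type]
    have : ∀ a, ∑ c, g (e.symm (a, c)) = ∑ c, g₁ c :=
      fun a => Finset.sum_congr rfl fun c _ => hge (a, c)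
    simp_rw [this]
    simp [mul_comm]
  have hcard : (Fintype.card ((v : V) → Fin (b v)) : ℝ)
      = (Fintype.card ((v : {x // x ∈ A}) → Fin (b v)) : ℝ)
        * (Fintype.card ((v : {x // ¬ x ∈ A}) → Fin (b v)) : ℝ) := by
    rw [Fintype.card_congr e, Fintype.card_prod]
    push_cast
    ring
  rw [h1, h2, h3, hcard]
  ring

lemma marg_factor (hb : ∀ v, 0 < b v)
    (p : ((v : V) → Fin (b v)) → ℝ) (hpos : ∀ i, 0 < p i) (hsum : ∑ i, p i = 1)
    (A B : Finset V) (hdisj : Disjoint A B) (hcover : A ∪ B = Finset.univ)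
    (hindep : ∀ i, p i = marg p A i * marg p B i)
    (M : Finset V) (j : (v : V) → Fin (b v)) :
    marg p M j = marg p (M ∩ A) j * marg p (M ∩ B) j := by
  classical
  have hABmem : ∀ v, v ∉ A → v ∈ B := by
    intro v hv
    have : v ∈ A ∪ B := hcover ▸ Finset.mem_univ v
    rcases Finset.mem_union.1 this with h | h
    · exact absurd h hv
    · exact h
  set N : ℝ := (Fintype.card ((v : V) → Fin (b v)) : ℝ) with hNdef
  set mA : ((v : V) → Fin (b v)) → ℝ := fun k => marg p A k with hmAdef
  set mB : ((v : V) → Fin (b v)) → ℝ := fun k => marg p B k with hmBdef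
  set fA : ((v : V) → Fin (b v)) → ℝ :=
    fun k => (if ∀ v ∈ M ∩ A, k v = j v then (1 : ℝ) else 0) * mA k with hfAdef
  set gB : ((v : V) → Fin (b v)) → ℝ :=
    fun k => (if ∀ v ∈ M ∩ B, k v = j v then (1 : ℝ) else 0) * mB k with hgBdef
  have hfA : ∀ k k', (∀ v ∈ A, k v = k' v) → fA k = fA k' := by
    intro k k' h
    have h1 : (∀ v ∈ M ∩ A, k v = j v) ↔ (∀ v ∈ M ∩ A, k' v = j v) := by
      constructor
      · intro hc v hv; rw [← h v (Finset.mem_inter.1 hv).2]; exact hc v hv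
      · intro hc v hv; rw [h v (Finset.mem_inter.1 hv).2]; exact hc v hv
    simp only [hfAdef, hmAdef]
    rw [if_congr h1 rfl rfl, marg_congr p A h]
  have hmA : ∀ k k', (∀ v ∈ A, k v = k' v) → mA k = mA k' :=
    fun k k' h => marg_congr p A h
  have hmB : ∀ k k', (∀ v ∉ A, k v = k' v) → mB k = mB k' := by
    intro k k' h
    exact marg_congr p B (fun v hv => h v (Finset.disjoint_right.1 hdisj hv))
  have hgB : ∀ k k', (∀ v ∉ A, k v = k' v) → gB k = gB k' := by
    intro k k' h
    have h1 : (∀ v ∈ M ∩ B, k v = j v) ↔ (∀ v ∈ M ∩ B, k' v = j v) := by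
      constructor
      · intro hc v hv
        rw [← h v (Finset.disjoint_right.1 hdisj (Finset.mem_inter.1 hv).2)]
        exact hc v hv
      · intro hc v hv
        rw [h v (Finset.disjoint_right.1 hdisj (Finset.mem_inter.1 hv).2)]
        exact hc v hv
    simp only [hgBdef]
    rw [if_congr h1 rfl rfl, hmB k k' h]
  have hsplit : ∀ k : (v : V) → Fin (b v),
      (∀ v ∈ M, k v = j v) ↔ ((∀ v ∈ M ∩ A, k v = j v) ∧ (∀ v ∈ M ∩ B, k v = j v)) := by
    intro k
    constructor
    · intro h
      exact ⟨fun v hv => h v (Finset.mem_inter.1 hv).1,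
        fun v hv => h v (Finset.mem_inter.1 hv).1⟩
    · rintro ⟨h1, h2⟩ v hv
      by_cases hA : v ∈ A
      · exact h1 v (Finset.mem_inter.2 ⟨hv, hA⟩)
      · exact h2 v (Finset.mem_inter.2 ⟨hv, hABmem v hA⟩)
  have hpoint : ∀ k, fA k * gB k = if ∀ v ∈ M, k v = j v then p k else 0 := by
    intro k
    simp only [hfAdef, hgBdef, hmAdef, hmBdef]
    by_cases h1 : ∀ v ∈ M ∩ A, k v = j v <;> by_cases h2 : ∀ v ∈ M ∩ B, k v = j v
    · rw [if_pos h1, if_pos h2, if_pos ((hsplit k).2 ⟨h1, h2⟩), hindep k]; ring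
    · rw [if_pos h1, if_neg h2, if_neg (fun hc => h2 ((hsplit k).1 hc).2)]; ring
    · rw [if_neg h1, if_pos h2, if_neg (fun hc => h1 ((hsplit k).1 hc).1)]; ring
    · rw [if_neg h1, if_neg h2, if_neg (fun hc => h1 ((hsplit k).1 hc).1)]; ring
  have e1 : N * marg p M j = (∑ k, fA k) * (∑ k, gB k) := by
    have := sum_factor hb A fA gB hfA hgB
    rw [show marg p M j = ∑ k, fA k * gB k from
      Finset.sum_congr rfl fun k _ => (hpoint k).symm]
    exact this
  have e2 : N * marg p (M ∩ A) j = (∑ k, fA k) * (∑ k, mB k) := by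
    have := sum_factor hb A fA mB hfA hmB
    rw [show marg p (M ∩ A) j = ∑ k, fA k * mB k from Finset.sum_congr rfl fun k _ => by
      simp only [hfAdef, hmAdef, hmBdef]
      by_cases h1 : ∀ v ∈ M ∩ A, k v = j v
      · rw [if_pos h1, if_pos h1, hindep k]; ring
      · rw [if_neg h1, if_neg h1]; ring]
    exact this
  have e3 : N * marg p (M ∩ B) j = (∑ k, mA k) * (∑ k, gB k) := by
    have := sum_factor hb A mA gB hmA hgB
    rw [show marg p (M ∩ B) j = ∑ k, mA k * gB k from Finset.sum_congr rfl fun k _ => by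
      simp only [hgBdef, hmAdef, hmBdef]
      by_cases h2 : ∀ v ∈ M ∩ B, k v = j v
      · rw [if_pos h2, if_pos h2, hindep k]; ring
      · rw [if_neg h2, if_neg h2]; ring]
    exact this
  have e4 : (∑ k, mA k) * (∑ k, mB k) = N := by
    have := sum_factor hb A mA mB hmA hmB
    rw [show (∑ k, mA k * mB k) = 1 from by
      rw [← hsum]; exact Finset.sum_congr rfl fun k _ => by simp [hmAdef, hmBdef, hindep k]] at this
    rw [← this, mul_one]
  have hN : (0 : ℝ) < N := by
    have : Nonempty ((v : V) → Fin (b v)) := ⟨fun v => ⟨0, hb v⟩⟩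
    rw [hNdef]
    exact_mod_cast Fintype.card_pos (α := (v : V) → Fin (b v))
  have key : N * N * (marg p (M ∩ A) j * marg p (M ∩ B) j) = N * N * marg p M j := by
    calc N * N * (marg p (M ∩ A) j * marg p (M ∩ B) j)
        = (N * marg p (M ∩ A) j) * (N * marg p (M ∩ B) j) := by ring
      _ = ((∑ k, fA k) * (∑ k, mB k)) * ((∑ k, mA k) * (∑ k, gB k)) := by rw [e2, e3]
      _ = ((∑ k, fA k) * (∑ k, gB k)) * ((∑ k, mA k) * (∑ k, mB k)) := by ring
      _ = (N * marg p M j) * N := by rw [← e1, e4]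
      _ = N * N * marg p M j := by ring
  exact (mul_left_cancel₀ (by positivity) key).symm

lemma alt_sum_eq_zero (M N : Finset V) (hN : N ⊆ M) (hne : (M \ N).Nonempty)
    (F : Finset V → ℝ) :
    ∑ L ∈ M.powerset, (-1 : ℝ) ^ (M.card - L.card) * F (L ∩ N) = 0 := by
  classical
  have hsign : ∀ L ∈ M.powerset,
      (-1 : ℝ) ^ (M.card - L.card) = (-1) ^ M.card * (-1) ^ L.card := by
    intro L hL
    have hle := Finset.card_le_card (Finset.mem_powerset.1 hL)
    have hsq : ((-1 : ℝ) ^ L.card) * ((-1) ^ L.card) = 1 := by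
      rw [← pow_add, ← two_mul, pow_mul]; norm_num
    calc (-1 : ℝ) ^ (M.card - L.card)
        = (-1) ^ (M.card - L.card) * (((-1) ^ L.card) * ((-1) ^ L.card)) := by
          rw [hsq, mul_one]
      _ = ((-1) ^ (M.card - L.card) * (-1) ^ L.card) * (-1) ^ L.card := by ring
      _ = (-1) ^ M.card * (-1) ^ L.card := by
          rw [← pow_add, Nat.sub_add_cancel hle]
  have hzero : (∑ T ∈ (M \ N).powerset, (-1 : ℝ) ^ T.card) = 0 := by
    have h : ((∑ T ∈ (M \ N).powerset, (-1 : ℤ) ^ T.card : ℤ) : ℝ) = 0 := by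
      rw [Finset.sum_powerset_neg_one_pow_card_of_nonempty hne]; norm_num
    rw [← h]; push_cast; rfl
  have hmain : ∑ L ∈ M.powerset, (-1 : ℝ) ^ L.card * F (L ∩ N)
      = ∑ x ∈ N.powerset ×ˢ (M \ N).powerset,
          ((-1 : ℝ) ^ x.1.card * F x.1) * (-1) ^ x.2.card := by
    refine Finset.sum_nbij' (i := fun L => (L ∩ N, L \ N)) (j := fun x => x.1 ∪ x.2)
      ?_ ?_ ?_ ?_ ?_
    · intro L hL
      have hLM := Finset.mem_powerset.1 hL
      refine Finset.mem_product.2 ⟨Finset.mem_powerset.2 Finset.inter_subset_right,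
        Finset.mem_powerset.2 ?_⟩
      intro x hx
      rcases Finset.mem_sdiff.1 hx with ⟨hx1, hx2⟩
      exact Finset.mem_sdiff.2 ⟨hLM hx1, hx2⟩
    · intro x hx
      rcases Finset.mem_product.1 hx with ⟨h1, h2⟩
      refine Finset.mem_powerset.2 (Finset.union_subset
        ((Finset.mem_powerset.1 h1).trans hN)
        ((Finset.mem_powerset.1 h2).trans (Finset.sdiff_subset)))
    · intro L _
      show L ∩ N ∪ L \ N = L
      ext a
      simp only [Finset.mem_union, Finset.mem_inter, Finset.mem_sdiff]
      by_cases h : a ∈ N <;> simp [h] <;> tauto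
    · intro x hx
      rcases Finset.mem_product.1 hx with ⟨h1, h2⟩
      have hS := Finset.mem_powerset.1 h1
      have hT := Finset.mem_powerset.1 h2
      have hTN : ∀ a ∈ x.2, a ∉ N := fun a ha => (Finset.mem_sdiff.1 (hT ha)).2
      have hSN : ∀ a ∈ x.1, a ∈ N := fun a ha => hS ha
      ext a <;> simp only [Finset.mem_inter, Finset.mem_union, Finset.mem_sdiff]
      · constructor
        · rintro ⟨h | h, hn⟩
          · exact h
          · exact absurd hn (hTN a h)
        · intro h; exact ⟨Or.inl h, hSN a h⟩
      · constructor
        · rintro ⟨h | h, hn⟩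
          · exact absurd (hSN a h) hn
          · exact h
        · intro h; exact ⟨Or.inr h, hTN a h⟩
    · intro L hL
      have hdisjLN : Disjoint (L ∩ N) (L \ N) :=
        Finset.disjoint_left.2 fun a ha hb =>
          (Finset.mem_sdiff.1 hb).2 (Finset.mem_inter.1 ha).2
      have hcard : (L ∩ N).card + (L \ N).card = L.card :=
        Finset.card_inter_add_card_sdiff L N
      rw [← hcard, pow_add]
      ring
  have step1 : ∑ L ∈ M.powerset, (-1 : ℝ) ^ (M.card - L.card) * F (L ∩ N)
      = (-1 : ℝ) ^ M.card * ∑ L ∈ M.powerset, (-1) ^ L.card * F (L ∩ N) := by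
    rw [Finset.mul_sum]
    exact Finset.sum_congr rfl fun L hL => by rw [hsign L hL]; ring
  rw [step1, hmain, Finset.sum_product]
  have : ∀ S ∈ N.powerset,
      (∑ T ∈ (M \ N).powerset, ((-1 : ℝ) ^ S.card * F S) * (-1) ^ T.card) = 0 := by
    intro S _
    rw [← Finset.mul_sum, hzero, mul_zero]
  rw [Finset.sum_congr rfl this]
  simp

end Aux

/-- if `{A, B}` partitions `V` and `X_A ⊥ X_B`, then for every `M`
intersecting both `A` and `B` the multivariate logistic parameter `η^M = λ^M_M`
vanishes identically. -/
theorem stmt9 {V : Type*} [Fintype V] [DecidableEq V] {b : V → ℕ} (hb : ∀ v, 0 < b v)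
    (p : ((v : V) → Fin (b v)) → ℝ) (hpos : ∀ i, 0 < p i) (hsum : ∑ i, p i = 1)
    (A B : Finset V) (hdisj : Disjoint A B) (hcover : A ∪ B = Finset.univ)
    (hindep : ∀ i, p i = marg p A i * marg p B i)
    (M : Finset V) (hMA : (M ∩ A).Nonempty) (hMB : (M ∩ B).Nonempty)
    (i : (v : V) → Fin (b v)) :
    mlogit hb p M i = 0 := by
  classical
  set z : (v : V) → Fin (b v) := fun v => (⟨0, hb v⟩ : Fin (b v)) with hzdef
  set FA : Finset V → ℝ :=
    fun S => Real.log (marg p (M ∩ A) (fun v => if v ∈ S then i v else z v)) with hFAdef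
  set FB : Finset V → ℝ :=
    fun S => Real.log (marg p (M ∩ B) (fun v => if v ∈ S then i v else z v)) with hFBdef
  have hlog : ∀ L ∈ M.powerset,
      Real.log (marg p M (fun v => if v ∈ L then i v else z v))
        = FA (L ∩ (M ∩ A)) + FB (L ∩ (M ∩ B)) := by
    intro L _
    rw [marg_factor hb p hpos hsum A B hdisj hcover hindep M]
    rw [Real.log_mul (ne_of_gt (marg_pos p hpos _ _)) (ne_of_gt (marg_pos p hpos _ _))]
    congr 1
    · simp only [hFAdef]
      congr 1
      refine marg_congr p (M ∩ A) fun v hv => ?_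
      by_cases h : v ∈ L <;> simp [h, hv, Finset.mem_inter]
    · simp only [hFBdef]
      congr 1
      refine marg_congr p (M ∩ B) fun v hv => ?_
      by_cases h : v ∈ L <;> simp [h, hv, Finset.mem_inter]
  have hne1 : (M \ (M ∩ A)).Nonempty := by
    obtain ⟨v, hv⟩ := hMB
    rcases Finset.mem_inter.1 hv with ⟨h1, h2⟩
    exact ⟨v, Finset.mem_sdiff.2 ⟨h1, fun hc =>
      (Finset.disjoint_left.1 hdisj (Finset.mem_inter.1 hc).2) h2⟩⟩
  have hne2 : (M \ (M ∩ B)).Nonempty := by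
    obtain ⟨v, hv⟩ := hMA
    rcases Finset.mem_inter.1 hv with ⟨h1, h2⟩
    exact ⟨v, Finset.mem_sdiff.2 ⟨h1, fun hc =>
      (Finset.disjoint_left.1 hdisj h2) (Finset.mem_inter.1 hc).2⟩⟩
  unfold mlogit
  calc ∑ L ∈ M.powerset, (-1 : ℝ) ^ (M.card - L.card) *
        Real.log (marg p M (fun v => if v ∈ L then i v else ⟨0, hb v⟩))
      = ∑ L ∈ M.powerset, (-1 : ℝ) ^ (M.card - L.card) *
          (FA (L ∩ (M ∩ A)) + FB (L ∩ (M ∩ B))) := by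
        exact Finset.sum_congr rfl fun L hL => by rw [← hlog L hL]
    _ = (∑ L ∈ M.powerset, (-1 : ℝ) ^ (M.card - L.card) * FA (L ∩ (M ∩ A)))
        + ∑ L ∈ M.powerset, (-1 : ℝ) ^ (M.card - L.card) * FB (L ∩ (M ∩ B)) := by
        rw [← Finset.sum_add_distrib]
        exact Finset.sum_congr rfl fun L _ => by ring
    _ = 0 := by
        rw [alt_sum_eq_zero M (M ∩ A) Finset.inter_subset_left hne1 FA,
          alt_sum_eq_zero M (M ∩ B) Finset.inter_subset_left hne2 FB, add_zero]
end

section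
/- Marginalization preserves bi-directed graph models: if a strictly positive discrete distribution p on I_V satisfies the connected set Markov property for a graph G = (V,E), then for any A ⊆ V the marginal distribution p_A satisfies the connected set Markov property for the induced subgraph G_A = (A, E_A). -/
open Finset

/-- The connected set Markov property for a graph `G`: for every disconnected vertex set
`D` with connected components `C 0, ..., C (r-1)` (a family of at least two nonempty,
pairwise disjoint connected sets covering `D` with no edges of `G` between distinct
members), the marginal over `D` factorizes into the product of the marginals over the
components. -/
def CSMP {V : Type*} [Fintype V] [DecidableEq V] {b : V → ℕ} (G : SimpleGraph V)
    (p : ((v : V) → Fin (b v)) → ℝ) : Prop :=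
  ∀ (D : Finset V) (r : ℕ) (C : Fin r → Finset V), 2 ≤ r →
    (∀ k, (C k).Nonempty) →
    (∀ k, (G.induce ((C k : Finset V) : Set V)).Connected) →
    (∀ j k, j ≠ k → Disjoint (C j) (C k)) →
    (∀ j k, j ≠ k → ∀ u ∈ C j, ∀ v ∈ C k, ¬ G.Adj u v) →
    D = Finset.univ.biUnion C →
    ∀ i, marg p D i = ∏ k, marg p (C k) i


noncomputable def extCell {V : Type*} [DecidableEq V] {b : V → ℕ} (hb : ∀ v, 0 < b v)
    (A : Finset V) (i : (v : ((A : Finset V) : Set V)) → Fin (b ↑v)) : (v : V) → Fin (b v) :=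
  fun v => if h : v ∈ A then i ⟨v, h⟩ else ⟨0, hb v⟩

lemma marg_marg {V : Type*} [Fintype V] [DecidableEq V] {b : V → ℕ}
    (hb : ∀ v, 0 < b v) (p : ((v : V) → Fin (b v)) → ℝ) (A : Finset V)
    (D : Finset ((A : Finset V) : Set V)) (i : (v : ((A : Finset V) : Set V)) → Fin (b ↑v)) :
    marg (fun j : (v : ((A : Finset V) : Set V)) → Fin (b ↑v) =>
        ∑ k : (v : V) → Fin (b v),
          if ∀ v : ((A : Finset V) : Set V), k ↑v = j v then p k else 0) D i
      = marg p (D.image Subtype.val) (extCell hb A i) := by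
  unfold marg
  have step1 : (∑ j : (v : ((A : Finset V) : Set V)) → Fin (b ↑v),
      if ∀ v ∈ D, j v = i v then
        (∑ k : (v : V) → Fin (b v),
          if ∀ v : ((A : Finset V) : Set V), k ↑v = j v then p k else 0) else 0)
      = ∑ j : (v : ((A : Finset V) : Set V)) → Fin (b ↑v), ∑ k : (v : V) → Fin (b v),
          if (∀ v ∈ D, j v = i v) ∧ (∀ v : ((A : Finset V) : Set V), k ↑v = j v)
          then p k else 0 := by
    refine Finset.sum_congr rfl fun j _ => ?_
    by_cases h : ∀ v ∈ D, j v = i v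
    · rw [if_pos h]
      exact Finset.sum_congr rfl fun k _ => if_congr (and_iff_right h).symm rfl rfl
    · rw [if_neg h]
      exact (Finset.sum_eq_zero fun k _ => if_neg fun hc => h hc.1).symm
  rw [step1, Finset.sum_comm]
  refine Finset.sum_congr rfl fun k _ => ?_
  have hcond : (∀ v ∈ D, k ↑v = i v) ↔
      (∀ u ∈ D.image Subtype.val, k u = extCell hb A i u) := by
    rw [Finset.forall_mem_image]
    refine forall₂_congr fun v hv => ?_
    have hvA : (v : V) ∈ A := v.2
    simp [extCell, hvA]
  rw [Finset.sum_eq_single (fun v : ((A : Finset V) : Set V) => k ↑v)]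
  · refine if_congr ?_ rfl rfl
    rw [and_iff_left (fun v => rfl)]
    exact hcond
  · intro j _ hj
    have : ¬ ∀ v : ((A : Finset V) : Set V), k ↑v = j v :=
      fun h => hj (funext fun v => (h v).symm)
    exact if_neg fun hc => this hc.2
  · simp

lemma connected_image {V : Type*} [DecidableEq V] (G : SimpleGraph V) (A : Finset V)
    (C : Finset ((A : Finset V) : Set V))
    (h : ((G.induce ((A : Finset V) : Set V)).induce ((C : Finset _) : Set _)).Connected) :
    (G.induce ((C.image Subtype.val : Finset V) : Set V)).Connected := by
  refine h.map ⟨fun x => ⟨x.1.1, ?_⟩, ?_⟩ ?_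
  · simp only [Finset.coe_image, Set.mem_image, Finset.mem_coe]
    exact ⟨x.1, x.2, rfl⟩
  · intro x y hxy
    simpa using hxy
  · rintro ⟨v, hv⟩
    simp only [Finset.coe_image, Set.mem_image, Finset.mem_coe] at hv
    obtain ⟨a, ha, rfl⟩ := hv
    exact ⟨⟨a, ha⟩, rfl⟩

/-- if `p` satisfies the connected set Markov property for `G`, then for any
`A ⊆ V` the marginal distribution `p_A` (a distribution on the sub-product indexed by `A`)
satisfies the connected set Markov property for the induced subgraph `G_A`. -/
theorem stmt13 {V : Type*} [Fintype V] [DecidableEq V] {b : V → ℕ} (hb : ∀ v, 0 < b v)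
    (G : SimpleGraph V) (p : ((v : V) → Fin (b v)) → ℝ)
    (hpos : ∀ i, 0 < p i) (hsum : ∑ i, p i = 1)
    (A : Finset V) (hG : CSMP G p) :
    CSMP (G.induce ((A : Finset V) : Set V))
      (fun j : (v : ((A : Finset V) : Set V)) → Fin (b ↑v) =>
        ∑ k : (v : V) → Fin (b v),
          if ∀ v : ((A : Finset V) : Set V), k ↑v = j v then p k else 0) := by
  intro D r C hr hne hconn hdisj hadj hD i
  have key := hG (D.image Subtype.val) r (fun k => (C k).image Subtype.val) hr
    (fun k => (hne k).image _)
    (fun k => connected_image G A (C k) (hconn k))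
    (fun j k hjk => (Finset.disjoint_image Subtype.val_injective).mpr (hdisj j k hjk))
    (fun j k hjk u hu v hv => by
      obtain ⟨a, ha, rfl⟩ := Finset.mem_image.mp hu
      obtain ⟨c, hc, rfl⟩ := Finset.mem_image.mp hv
      have := hadj j k hjk a ha c hc
      intro hadj'
      exact this hadj')
    (by rw [hD, Finset.biUnion_image])
    (extCell hb A i)
  rw [marg_marg hb p A D i, key]
  exact Finset.prod_congr rfl fun k _ => (marg_marg hb p A (C k) i).symm
end

section
/- Let X_1, X_2, X_3, X_4 be discrete random variables with strictly positive joint distribution. The conjunction of the three independence statements X_1 ⊥ X_4, X_2 ⊥ X_4 | X_1, and X_1 ⊥ X_3 | X_4 is equivalent to the conjunction of the two marginal independence statements (X_1) ⊥ (X_3, X_4) and (X_1, X_2) ⊥ X_4. -/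
open Finset

section
variable {I₁ I₂ I₃ I₄ : Type*} [Fintype I₁] [Fintype I₂] [Fintype I₃] [Fintype I₄]

/-- Marginal of `X₁`. -/
noncomputable def m1 (p : I₁ → I₂ → I₃ → I₄ → ℝ) (a : I₁) : ℝ := ∑ b, ∑ c, ∑ d, p a b c d
/-- Marginal of `X₄`. -/
noncomputable def m4 (p : I₁ → I₂ → I₃ → I₄ → ℝ) (d : I₄) : ℝ := ∑ a, ∑ b, ∑ c, p a b c d
/-- Marginal of `(X₁, X₂)`. -/
noncomputable def m12 (p : I₁ → I₂ → I₃ → I₄ → ℝ) (a : I₁) (b : I₂) : ℝ := ∑ c, ∑ d, p a b c d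
/-- Marginal of `(X₃, X₄)`. -/
noncomputable def m34 (p : I₁ → I₂ → I₃ → I₄ → ℝ) (c : I₃) (d : I₄) : ℝ := ∑ a, ∑ b, p a b c d
/-- Marginal of `(X₁, X₄)`. -/
noncomputable def m14 (p : I₁ → I₂ → I₃ → I₄ → ℝ) (a : I₁) (d : I₄) : ℝ := ∑ b, ∑ c, p a b c d
/-- Marginal of `(X₁, X₂, X₄)`. -/
noncomputable def m124 (p : I₁ → I₂ → I₃ → I₄ → ℝ) (a : I₁) (b : I₂) (d : I₄) : ℝ := ∑ c, p a b c d
/-- Marginal of `(X₁, X₃, X₄)`. -/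
noncomputable def m134 (p : I₁ → I₂ → I₃ → I₄ → ℝ) (a : I₁) (c : I₃) (d : I₄) : ℝ := ∑ b, p a b c d

/-- for a strictly positive joint distribution of `X₁, X₂, X₃, X₄`, the
conjunction `X₁ ⊥ X₄`, `X₂ ⊥ X₄ | X₁`, `X₁ ⊥ X₃ | X₄` is equivalent to the conjunction
`X₁ ⊥ (X₃, X₄)`, `(X₁, X₂) ⊥ X₄`. -/
theorem stmt17 (p : I₁ → I₂ → I₃ → I₄ → ℝ)
    (hpos : ∀ a b c d, 0 < p a b c d)
    (hsum : ∑ a, ∑ b, ∑ c, ∑ d, p a b c d = 1) :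
    ((∀ a d, m14 p a d = m1 p a * m4 p d) ∧
     (∀ a b d, m124 p a b d * m1 p a = m12 p a b * m14 p a d) ∧
     (∀ a c d, m134 p a c d * m4 p d = m14 p a d * m34 p c d)) ↔
    ((∀ a c d, m134 p a c d = m1 p a * m34 p c d) ∧
     (∀ a b d, m124 p a b d = m12 p a b * m4 p d)) := by
  have h1 : Nonempty I₁ := by
    by_contra h; rw [not_nonempty_iff] at h; simp [univ_eq_empty] at hsum
  have h2 : Nonempty I₂ := by
    by_contra h; rw [not_nonempty_iff] at h; simp [univ_eq_empty] at hsum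
  have h3 : Nonempty I₃ := by
    by_contra h; rw [not_nonempty_iff] at h; simp [univ_eq_empty] at hsum
  have h4 : Nonempty I₄ := by
    by_contra h; rw [not_nonempty_iff] at h; simp [univ_eq_empty] at hsum
  have hm1 : ∀ a, 0 < m1 p a := fun a =>
    Finset.sum_pos (fun b _ => Finset.sum_pos (fun c _ => Finset.sum_pos
      (fun d _ => hpos a b c d) univ_nonempty) univ_nonempty) univ_nonempty
  have hm4 : ∀ d, 0 < m4 p d := fun d =>
    Finset.sum_pos (fun a _ => Finset.sum_pos (fun b _ => Finset.sum_pos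
      (fun c _ => hpos a b c d) univ_nonempty) univ_nonempty) univ_nonempty
  constructor
  · rintro ⟨h14, h124, h134⟩
    constructor
    · intro a c d
      have := h134 a c d
      rw [h14 a d] at this
      exact mul_right_cancel₀ (hm4 d).ne' (by linear_combination this)
    · intro a b d
      have := h124 a b d
      rw [h14 a d] at this
      exact mul_right_cancel₀ (hm1 a).ne' (by linear_combination this)
  · rintro ⟨h134, h124⟩
    have h14 : ∀ a d, m14 p a d = m1 p a * m4 p d := by
      intro a d
      have e1 : m14 p a d = ∑ b, m124 p a b d := by
        unfold m14 m124; rfl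
      have e2 : m1 p a = ∑ b, m12 p a b := by
        unfold m1 m12; rfl
      rw [e1, e2, Finset.sum_mul]
      exact Finset.sum_congr rfl fun b _ => (h124 a b d).trans rfl
    refine ⟨h14, fun a b d => ?_, fun a c d => ?_⟩
    · rw [h124 a b d, h14 a d]; ring
    · rw [h134 a c d, h14 a d]; ring

end
end
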